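/- Let C and D be real constants with D > 0, let ε ∈ {+1, −1}, and define φ(u,s) := D/(√(C − u + s²)·(√(C − u + s²) + ε·s)²) on an open set where C − u + s² > 0 and √(C − u + s²) + ε·s > 0. Then φ satisfies the projective PDE (∗): φ₂₂ = 2(φ₁ − s·φ₁₂), and with ψ := (φ₂ + 2s·φ₁)/(2φ) it satisfies ψ² − (ψ₂ + 2s·ψ₁) = 0 (the Einstein PDE with μ = 0 and K = 0). -/

import Mathlib

set_option maxHeartbeats 1000000


/-- First partial derivative of `f = f(u,s)` with respect to the first variable. -/
noncomputable def pd1 (f : ℝ → ℝ → ℝ) (u s : ℝ) : ℝ := deriv (fun t => f t s) u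

/-- First partial derivative of `f = f(u,s)` with respect to the second variable. -/
noncomputable def pd2 (f : ℝ → ℝ → ℝ) (u s : ℝ) : ℝ := deriv (f u) s

/-- `ψ := (φ₂ + 2s·φ₁)/(2φ)`. -/
noncomputable def psi (f : ℝ → ℝ → ℝ) (u s : ℝ) : ℝ :=
  (pd2 f u s + 2 * s * pd1 f u s) / (2 * f u s)

namespace Stmt17Aux

lemma hasDerivAt_W_u (C s u : ℝ) (hr : 0 < C - u + s ^ 2) :
    HasDerivAt (fun t => Real.sqrt (C - t + s ^ 2))
      (-1 / (2 * Real.sqrt (C - u + s ^ 2))) u := by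
  have h0 : HasDerivAt (fun t : ℝ => C - t + s ^ 2) (-1) u := by
    simpa using (((hasDerivAt_id u).const_sub C).add_const (s ^ 2))
  exact h0.sqrt hr.ne'

lemma hasDerivAt_W_s (C u s : ℝ) (hr : 0 < C - u + s ^ 2) :
    HasDerivAt (fun y => Real.sqrt (C - u + y ^ 2))
      ((2 * s) / (2 * Real.sqrt (C - u + s ^ 2))) s := by
  have h0 : HasDerivAt (fun y : ℝ => C - u + y ^ 2) (2 * s) s := by
    simpa using ((hasDerivAt_pow 2 s).const_add (C - u))
  exact h0.sqrt hr.ne'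

/-- φ₁ -/
lemma L_u_phi (C D ε u s : ℝ) (hr : 0 < C - u + s ^ 2)
    (hws : 0 < Real.sqrt (C - u + s ^ 2) + ε * s) :
    HasDerivAt
      (fun t => D / (Real.sqrt (C - t + s ^ 2) * (Real.sqrt (C - t + s ^ 2) + ε * s) ^ 2))
      (D * (3 * Real.sqrt (C - u + s ^ 2) + ε * s) /
        (2 * Real.sqrt (C - u + s ^ 2) ^ 3 * (Real.sqrt (C - u + s ^ 2) + ε * s) ^ 3)) u := by
  set W := Real.sqrt (C - u + s ^ 2) with hWdef
  have hW0 : W ≠ 0 := (Real.sqrt_pos.mpr hr).ne'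
  have hws0 : W + ε * s ≠ 0 := hws.ne'
  have hW := hasDerivAt_W_u C s u hr
  have hplus : HasDerivAt (fun t => Real.sqrt (C - t + s ^ 2) + ε * s)
      (-1 / (2 * W)) u := hW.add_const _
  have hden : HasDerivAt
      (fun t => Real.sqrt (C - t + s ^ 2) * (Real.sqrt (C - t + s ^ 2) + ε * s) ^ 2)
      ((-1 / (2 * W)) * (W + ε * s) ^ 2
        + W * ((2 : ℕ) * (W + ε * s) ^ 1 * (-1 / (2 * W)))) u := hW.mul (hplus.pow 2)
  have hdiv := (hasDerivAt_const u D).div hden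
    (mul_ne_zero hW0 (pow_ne_zero 2 hws0))
  refine hdiv.congr_deriv ?_
  simp only [← hWdef]
  field_simp
  try ring

/-- φ₂ -/
lemma L_s_phi (C D ε u s : ℝ) (hr : 0 < C - u + s ^ 2)
    (hws : 0 < Real.sqrt (C - u + s ^ 2) + ε * s) :
    HasDerivAt
      (fun y => D / (Real.sqrt (C - u + y ^ 2) * (Real.sqrt (C - u + y ^ 2) + ε * y) ^ 2))
      (-D * (3 * Real.sqrt (C - u + s ^ 2) * s + ε * s ^ 2 + 2 * ε * Real.sqrt (C - u + s ^ 2) ^ 2) /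
        (Real.sqrt (C - u + s ^ 2) ^ 3 * (Real.sqrt (C - u + s ^ 2) + ε * s) ^ 3)) s := by
  set W := Real.sqrt (C - u + s ^ 2) with hWdef
  have hW0 : W ≠ 0 := (Real.sqrt_pos.mpr hr).ne'
  have hws0 : W + ε * s ≠ 0 := hws.ne'
  have hW := hasDerivAt_W_s C u s hr
  have hplus : HasDerivAt (fun y => Real.sqrt (C - u + y ^ 2) + ε * y)
      ((2 * s) / (2 * W) + ε) s := by
    exact (hW.add ((hasDerivAt_id' s).const_mul ε)).congr_deriv (by simp [hWdef])
  have hden : HasDerivAt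
      (fun y => Real.sqrt (C - u + y ^ 2) * (Real.sqrt (C - u + y ^ 2) + ε * y) ^ 2)
      (((2 * s) / (2 * W)) * (W + ε * s) ^ 2
        + W * ((2 : ℕ) * (W + ε * s) ^ 1 * ((2 * s) / (2 * W) + ε))) s := hW.mul (hplus.pow 2)
  have hdiv := (hasDerivAt_const s D).div hden
    (mul_ne_zero hW0 (pow_ne_zero 2 hws0))
  refine hdiv.congr_deriv ?_
  simp only [← hWdef]
  field_simp
  try ring

/-- φ₁₂ : s-derivative of the closed form of φ₁. -/
lemma L_s_P1 (C D ε u s : ℝ) (hr : 0 < C - u + s ^ 2)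
    (hws : 0 < Real.sqrt (C - u + s ^ 2) + ε * s) :
    HasDerivAt
      (fun y => D * (3 * Real.sqrt (C - u + y ^ 2) + ε * y) /
        (2 * Real.sqrt (C - u + y ^ 2) ^ 3 * (Real.sqrt (C - u + y ^ 2) + ε * y) ^ 3))
      (-D * (15 * s * Real.sqrt (C - u + s ^ 2) ^ 2
          + 12 * ε * Real.sqrt (C - u + s ^ 2) * s ^ 2
          + 8 * ε * Real.sqrt (C - u + s ^ 2) ^ 3
          + 3 * ε ^ 2 * s ^ 3 + 2 * ε ^ 2 * s * Real.sqrt (C - u + s ^ 2) ^ 2) /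
        (2 * Real.sqrt (C - u + s ^ 2) ^ 5 * (Real.sqrt (C - u + s ^ 2) + ε * s) ^ 4)) s := by
  set W := Real.sqrt (C - u + s ^ 2) with hWdef
  have hW0 : W ≠ 0 := (Real.sqrt_pos.mpr hr).ne'
  have hws0 : W + ε * s ≠ 0 := hws.ne'
  have hW := hasDerivAt_W_s C u s hr
  have hplus : HasDerivAt (fun y => Real.sqrt (C - u + y ^ 2) + ε * y)
      ((2 * s) / (2 * W) + ε) s := by
    exact (hW.add ((hasDerivAt_id' s).const_mul ε)).congr_deriv (by simp [hWdef])
  have hnum : HasDerivAt (fun y => D * (3 * Real.sqrt (C - u + y ^ 2) + ε * y))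
      (D * (3 * ((2 * s) / (2 * W)) + ε)) s := by
    have := (hW.const_mul 3).add ((hasDerivAt_id s).const_mul ε)
    simpa [mul_comm] using this.const_mul D
  have hden : HasDerivAt
      (fun y => 2 * Real.sqrt (C - u + y ^ 2) ^ 3 * (Real.sqrt (C - u + y ^ 2) + ε * y) ^ 3)
      ((2 * ((3 : ℕ) * W ^ 2 * ((2 * s) / (2 * W)))) * (W + ε * s) ^ 3
        + (2 * W ^ 3) * ((3 : ℕ) * (W + ε * s) ^ 2 * ((2 * s) / (2 * W) + ε))) s := by
    exact ((hW.pow 3).const_mul 2).mul (hplus.pow 3)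
  have hdiv := hnum.div hden
    (by positivity)
  refine hdiv.congr_deriv ?_
  simp only [← hWdef]
  field_simp
  try ring

/-- φ₂₂ : s-derivative of the closed form of φ₂. -/
lemma L_s_P2 (C D ε u s : ℝ) (hr : 0 < C - u + s ^ 2)
    (hws : 0 < Real.sqrt (C - u + s ^ 2) + ε * s) :
    HasDerivAt
      (fun y => -D * (3 * Real.sqrt (C - u + y ^ 2) * y + ε * y ^ 2
          + 2 * ε * Real.sqrt (C - u + y ^ 2) ^ 2) /
        (Real.sqrt (C - u + y ^ 2) ^ 3 * (Real.sqrt (C - u + y ^ 2) + ε * y) ^ 3))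
      (3 * D * ((2 * ε ^ 2 - 1) * Real.sqrt (C - u + s ^ 2) ^ 4
          + 4 * ε * Real.sqrt (C - u + s ^ 2) ^ 3 * s
          + (5 + ε ^ 2) * Real.sqrt (C - u + s ^ 2) ^ 2 * s ^ 2
          + 4 * ε * Real.sqrt (C - u + s ^ 2) * s ^ 3 + ε ^ 2 * s ^ 4) /
        (Real.sqrt (C - u + s ^ 2) ^ 5 * (Real.sqrt (C - u + s ^ 2) + ε * s) ^ 4)) s := by
  set W := Real.sqrt (C - u + s ^ 2) with hWdef
  have hW0 : W ≠ 0 := (Real.sqrt_pos.mpr hr).ne'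
  have hws0 : W + ε * s ≠ 0 := hws.ne'
  have hW := hasDerivAt_W_s C u s hr
  have hplus : HasDerivAt (fun y => Real.sqrt (C - u + y ^ 2) + ε * y)
      ((2 * s) / (2 * W) + ε) s := by
    exact (hW.add ((hasDerivAt_id' s).const_mul ε)).congr_deriv (by simp [hWdef])
  have hnum : HasDerivAt
      (fun y => -D * (3 * Real.sqrt (C - u + y ^ 2) * y + ε * y ^ 2
          + 2 * ε * Real.sqrt (C - u + y ^ 2) ^ 2))
      (-D * ((3 * ((2 * s) / (2 * W)) * s + 3 * W)
        + ε * (2 * s)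
        + 2 * ε * ((2 : ℕ) * W ^ 1 * ((2 * s) / (2 * W))))) s := by
    have h1 : HasDerivAt (fun y => 3 * Real.sqrt (C - u + y ^ 2) * y)
        (3 * ((2 * s) / (2 * W)) * s + 3 * W) s := by
      have := (hW.const_mul 3).mul (hasDerivAt_id' s)
      exact this.congr_deriv (by rw [hWdef]; ring)
    have h2 : HasDerivAt (fun y : ℝ => ε * y ^ 2) (ε * (2 * s)) s := by
      simpa using (hasDerivAt_pow 2 s).const_mul ε
    have h3 : HasDerivAt (fun y => 2 * ε * Real.sqrt (C - u + y ^ 2) ^ 2)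
        (2 * ε * ((2 : ℕ) * W ^ 1 * ((2 * s) / (2 * W)))) s := (hW.pow 2).const_mul (2 * ε)
    exact ((h1.add h2).add h3).const_mul (-D)
  have hden : HasDerivAt
      (fun y => Real.sqrt (C - u + y ^ 2) ^ 3 * (Real.sqrt (C - u + y ^ 2) + ε * y) ^ 3)
      (((3 : ℕ) * W ^ 2 * ((2 * s) / (2 * W))) * (W + ε * s) ^ 3
        + W ^ 3 * ((3 : ℕ) * (W + ε * s) ^ 2 * ((2 * s) / (2 * W) + ε))) s :=
    (hW.pow 3).mul (hplus.pow 3)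
  have hdiv := hnum.div hden (by positivity)
  refine hdiv.congr_deriv ?_
  simp only [← hWdef]
  field_simp
  try ring

/-- ψ₂ -/
lemma L_s_psi (C ε u s : ℝ) (hr : 0 < C - u + s ^ 2)
    (hws : 0 < Real.sqrt (C - u + s ^ 2) + ε * s) :
    HasDerivAt (fun y => -ε / (Real.sqrt (C - u + y ^ 2) + ε * y))
      (ε * (s / Real.sqrt (C - u + s ^ 2) + ε) /
        (Real.sqrt (C - u + s ^ 2) + ε * s) ^ 2) s := by
  set W := Real.sqrt (C - u + s ^ 2) with hWdef
  have hW0 : W ≠ 0 := (Real.sqrt_pos.mpr hr).ne'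
  have hws0 : W + ε * s ≠ 0 := hws.ne'
  have hW := hasDerivAt_W_s C u s hr
  have hplus : HasDerivAt (fun y => Real.sqrt (C - u + y ^ 2) + ε * y)
      ((2 * s) / (2 * W) + ε) s := by
    exact (hW.add ((hasDerivAt_id' s).const_mul ε)).congr_deriv (by simp [hWdef])
  have hdiv := (hasDerivAt_const s (-ε)).div hplus hws0
  refine hdiv.congr_deriv ?_
  simp only [← hWdef]
  field_simp
  try ring

/-- ψ₁ -/
lemma L_u_psi (C ε u s : ℝ) (hr : 0 < C - u + s ^ 2)
    (hws : 0 < Real.sqrt (C - u + s ^ 2) + ε * s) :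
    HasDerivAt (fun t => -ε / (Real.sqrt (C - t + s ^ 2) + ε * s))
      (-ε / (2 * Real.sqrt (C - u + s ^ 2) * (Real.sqrt (C - u + s ^ 2) + ε * s) ^ 2)) u := by
  set W := Real.sqrt (C - u + s ^ 2) with hWdef
  have hW0 : W ≠ 0 := (Real.sqrt_pos.mpr hr).ne'
  have hws0 : W + ε * s ≠ 0 := hws.ne'
  have hW := hasDerivAt_W_u C s u hr
  have hplus : HasDerivAt (fun t => Real.sqrt (C - t + s ^ 2) + ε * s)
      (-1 / (2 * W)) u := hW.add_const _
  have hdiv := (hasDerivAt_const u (-ε)).div hplus hws0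
  refine hdiv.congr_deriv ?_
  simp only [← hWdef]
  field_simp
  try ring

end Stmt17Aux

open Stmt17Aux in
/-- The case `D ≠ 0`, `σ = 0` (Berwald type): `φ(u,s) = D/(√(C−u+s²)·(√(C−u+s²)+εs)²)`
satisfies the projective PDE `φ₂₂ = 2(φ₁ − s·φ₁₂)` and `ψ² − (ψ₂ + 2s·ψ₁) = 0`. -/
theorem stmt_17 (C D : ℝ) (hD : 0 < D) (ε : ℝ) (hε : ε = 1 ∨ ε = -1)
    (φ : ℝ → ℝ → ℝ)
    (hφ : ∀ u s : ℝ, φ u s = D / (Real.sqrt (C - u + s ^ 2)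
        * (Real.sqrt (C - u + s ^ 2) + ε * s) ^ 2)) :
    ∀ u s : ℝ, 0 < C - u + s ^ 2 → 0 < Real.sqrt (C - u + s ^ 2) + ε * s →
      (pd2 (pd2 φ) u s = 2 * (pd1 φ u s - s * pd2 (pd1 φ) u s)
        ∧ (psi φ u s) ^ 2 - (pd2 (psi φ) u s + 2 * s * pd1 (psi φ) u s) = 0) := by
  -- closed forms for the first partial derivatives, everywhere on the domain
  have hpd1 : ∀ u s : ℝ, 0 < C - u + s ^ 2 → 0 < Real.sqrt (C - u + s ^ 2) + ε * s →
      pd1 φ u s = D * (3 * Real.sqrt (C - u + s ^ 2) + ε * s) /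
        (2 * Real.sqrt (C - u + s ^ 2) ^ 3 * (Real.sqrt (C - u + s ^ 2) + ε * s) ^ 3) := by
    intro u s hr hws
    have : (fun t => φ t s)
        = fun t => D / (Real.sqrt (C - t + s ^ 2) * (Real.sqrt (C - t + s ^ 2) + ε * s) ^ 2) := by
      funext t; exact hφ t s
    rw [pd1, this]
    exact (L_u_phi C D ε u s hr hws).deriv
  have hpd2 : ∀ u s : ℝ, 0 < C - u + s ^ 2 → 0 < Real.sqrt (C - u + s ^ 2) + ε * s →
      pd2 φ u s = -D * (3 * Real.sqrt (C - u + s ^ 2) * s + ε * s ^ 2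
          + 2 * ε * Real.sqrt (C - u + s ^ 2) ^ 2) /
        (Real.sqrt (C - u + s ^ 2) ^ 3 * (Real.sqrt (C - u + s ^ 2) + ε * s) ^ 3) := by
    intro u s hr hws
    have : (φ u)
        = fun y => D / (Real.sqrt (C - u + y ^ 2) * (Real.sqrt (C - u + y ^ 2) + ε * y) ^ 2) := by
      funext y; exact hφ u y
    rw [pd2, this]
    exact (L_s_phi C D ε u s hr hws).deriv
  -- closed form for psi
  have hpsi : ∀ u s : ℝ, 0 < C - u + s ^ 2 → 0 < Real.sqrt (C - u + s ^ 2) + ε * s →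
      psi φ u s = -ε / (Real.sqrt (C - u + s ^ 2) + ε * s) := by
    intro u s hr hws
    have hW0 : Real.sqrt (C - u + s ^ 2) ≠ 0 := (Real.sqrt_pos.mpr hr).ne'
    have hws0 : Real.sqrt (C - u + s ^ 2) + ε * s ≠ 0 := hws.ne'
    rw [psi, hpd1 u s hr hws, hpd2 u s hr hws, hφ u s]
    set W := Real.sqrt (C - u + s ^ 2) with hWdef
    field_simp
    ring
  intro u s hr hws
  have hW0 : Real.sqrt (C - u + s ^ 2) ≠ 0 := (Real.sqrt_pos.mpr hr).ne'
  have hws0 : Real.sqrt (C - u + s ^ 2) + ε * s ≠ 0 := hws.ne'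
  -- eventual domain membership in the s-direction
  have hevs : ∀ᶠ y in nhds s, 0 < C - u + y ^ 2 ∧ 0 < Real.sqrt (C - u + y ^ 2) + ε * y := by
    have c1 : ContinuousAt (fun y : ℝ => C - u + y ^ 2) s := by fun_prop
    have c2 : ContinuousAt (fun y : ℝ => Real.sqrt (C - u + y ^ 2) + ε * y) s := by fun_prop
    exact (c1.eventually_mem (lt_mem_nhds hr)).and (c2.eventually_mem (lt_mem_nhds hws))
  -- eventual domain membership in the u-direction
  have hevu : ∀ᶠ t in nhds u, 0 < C - t + s ^ 2 ∧ 0 < Real.sqrt (C - t + s ^ 2) + ε * s := by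
    have c1 : ContinuousAt (fun t : ℝ => C - t + s ^ 2) u := by fun_prop
    have c2 : ContinuousAt (fun t : ℝ => Real.sqrt (C - t + s ^ 2) + ε * s) u := by fun_prop
    exact (c1.eventually_mem (lt_mem_nhds hr)).and (c2.eventually_mem (lt_mem_nhds hws))
  -- second derivatives of φ
  have h22 : pd2 (pd2 φ) u s
      = 3 * D * ((2 * ε ^ 2 - 1) * Real.sqrt (C - u + s ^ 2) ^ 4
          + 4 * ε * Real.sqrt (C - u + s ^ 2) ^ 3 * s
          + (5 + ε ^ 2) * Real.sqrt (C - u + s ^ 2) ^ 2 * s ^ 2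
          + 4 * ε * Real.sqrt (C - u + s ^ 2) * s ^ 3 + ε ^ 2 * s ^ 4) /
        (Real.sqrt (C - u + s ^ 2) ^ 5 * (Real.sqrt (C - u + s ^ 2) + ε * s) ^ 4) := by
    have hev : (pd2 φ u) =ᶠ[nhds s]
        (fun y => -D * (3 * Real.sqrt (C - u + y ^ 2) * y + ε * y ^ 2
          + 2 * ε * Real.sqrt (C - u + y ^ 2) ^ 2) /
        (Real.sqrt (C - u + y ^ 2) ^ 3 * (Real.sqrt (C - u + y ^ 2) + ε * y) ^ 3)) :=
      hevs.mono fun y hy => hpd2 u y hy.1 hy.2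
    rw [pd2, hev.deriv_eq]
    exact (L_s_P2 C D ε u s hr hws).deriv
  have h12 : pd2 (pd1 φ) u s
      = -D * (15 * s * Real.sqrt (C - u + s ^ 2) ^ 2
          + 12 * ε * Real.sqrt (C - u + s ^ 2) * s ^ 2
          + 8 * ε * Real.sqrt (C - u + s ^ 2) ^ 3
          + 3 * ε ^ 2 * s ^ 3 + 2 * ε ^ 2 * s * Real.sqrt (C - u + s ^ 2) ^ 2) /
        (2 * Real.sqrt (C - u + s ^ 2) ^ 5 * (Real.sqrt (C - u + s ^ 2) + ε * s) ^ 4) := by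
    have hev : (pd1 φ u) =ᶠ[nhds s]
        (fun y => D * (3 * Real.sqrt (C - u + y ^ 2) + ε * y) /
        (2 * Real.sqrt (C - u + y ^ 2) ^ 3 * (Real.sqrt (C - u + y ^ 2) + ε * y) ^ 3)) :=
      hevs.mono fun y hy => hpd1 u y hy.1 hy.2
    rw [pd2, hev.deriv_eq]
    exact (L_s_P1 C D ε u s hr hws).deriv
  -- derivatives of psi
  have hq2 : pd2 (psi φ) u s
      = ε * (s / Real.sqrt (C - u + s ^ 2) + ε) /
        (Real.sqrt (C - u + s ^ 2) + ε * s) ^ 2 := by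
    have hev : (psi φ u) =ᶠ[nhds s]
        (fun y => -ε / (Real.sqrt (C - u + y ^ 2) + ε * y)) :=
      hevs.mono fun y hy => hpsi u y hy.1 hy.2
    rw [pd2, hev.deriv_eq]
    exact (L_s_psi C ε u s hr hws).deriv
  have hq1 : pd1 (psi φ) u s
      = -ε / (2 * Real.sqrt (C - u + s ^ 2) * (Real.sqrt (C - u + s ^ 2) + ε * s) ^ 2) := by
    have hev : (fun t => psi φ t s) =ᶠ[nhds u]
        (fun t => -ε / (Real.sqrt (C - t + s ^ 2) + ε * s)) :=
      hevu.mono fun t ht => hpsi t s ht.1 ht.2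
    rw [pd1, hev.deriv_eq]
    exact (L_u_psi C ε u s hr hws).deriv
  constructor
  · rw [h22, h12, hpd1 u s hr hws]
    set W := Real.sqrt (C - u + s ^ 2) with hWdef
    have he2 : ε ^ 2 = 1 := by rcases hε with rfl | rfl <;> norm_num
    field_simp [hW0, hws0]
    linear_combination (6 * W ^ 4) * he2
  · rw [hpsi u s hr hws, hq2, hq1]
    set W := Real.sqrt (C - u + s ^ 2) with hWdef
    field_simp
    ring
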